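/- Let ψ: ℝ → ℝ be C¹ with ψ(0)=1, ψ even, and suppose there exist C>0 and δ>1 such that |ψ(x)| + |x·ψ'(x)| ≤ C·(1+x²)^{-δ/2} for all x ∈ ℝ. Let μ be a probability measure on ℝ and let (c,d) be a bounded interval with c < d. Set C₀ = ∫_ℝ |ψ(x)|² dx. Then lim_{a→0⁺} (1/a)·∫_c^d |(ψ_a * μ)(x)|² dx = C₀·( Σ_{x ∈ (c,d)} μ({x})² + (1/2)·(μ({c})² + μ({d})²) ), where the sum runs over the (at most countably many) atoms of μ in (c,d). -/

import Mathlib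

open MeasureTheory Filter Real Set Topology

section Aux
variable {ψ : ℝ → ℝ} {C δ : ℝ}

lemma integrable_decay {δ : ℝ} (hδ : 1 < δ) :
    Integrable (fun x : ℝ => (1 + x ^ 2) ^ (-δ / 2)) := by
  have h := integrable_rpow_neg_one_add_norm_sq (E := ℝ) (μ := volume) (r := δ) (by simpa using hδ)
  refine h.congr (Eventually.of_forall fun x => ?_)
  simp [Real.norm_eq_abs, sq_abs]

lemma psi_integrable (hψ : Continuous ψ) (hδ : 1 < δ)
    (hb : ∀ x : ℝ, |ψ x| ≤ C * (1 + x ^ 2) ^ (-δ / 2)) : Integrable ψ := by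
  refine ((integrable_decay hδ).const_mul C).mono' hψ.aestronglyMeasurable
    (Eventually.of_forall fun x => ?_)
  simpa [Real.norm_eq_abs] using hb x

lemma psi_bdd (hC : 0 < C) (hδ : 1 < δ)
    (hb : ∀ x : ℝ, |ψ x| ≤ C * (1 + x ^ 2) ^ (-δ / 2)) (x : ℝ) : |ψ x| ≤ C := by
  refine (hb x).trans ?_
  calc C * (1 + x ^ 2) ^ (-δ / 2) ≤ C * 1 := by
        gcongr
        exact Real.rpow_le_one_of_one_le_of_nonpos (by nlinarith [sq_nonneg x]) (by linarith)
    _ = C := mul_one C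

lemma psi_sq_integrable (hψ : Continuous ψ) (hC : 0 < C) (hδ : 1 < δ)
    (hb : ∀ x : ℝ, |ψ x| ≤ C * (1 + x ^ 2) ^ (-δ / 2)) :
    Integrable (fun x => ψ x ^ 2) := by
  refine ((psi_integrable hψ hδ hb).abs.const_mul C).mono' (hψ.pow 2).aestronglyMeasurable
    (Eventually.of_forall fun x => ?_)
  rw [Real.norm_eq_abs, abs_of_nonneg (sq_nonneg _), sq]
  calc ψ x * ψ x ≤ |ψ x| * |ψ x| := le_abs_self _ |>.trans (by rw [abs_mul])
    _ ≤ C * |ψ x| := by have := psi_bdd hC hδ hb x; have := abs_nonneg (ψ x); nlinarith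

lemma psi_tendsto (hC : 0 < C) (hδ : 1 < δ)
    (hb : ∀ x : ℝ, |ψ x| ≤ C * (1 + x ^ 2) ^ (-δ / 2)) :
    Tendsto ψ atTop (𝓝 0) ∧ Tendsto ψ atBot (𝓝 0) := by
  have key : Tendsto (fun x : ℝ => C * (1 + x ^ 2) ^ (-δ / 2)) (atTop ⊔ atBot) (𝓝 0) := by
    rw [show (0:ℝ) = C * 0 by ring]
    apply Tendsto.const_mul
    have h1 : Tendsto (fun x : ℝ => 1 + x ^ 2) (atTop ⊔ atBot) atTop := by
      apply tendsto_atTop_add_const_left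
      rw [tendsto_sup]
      constructor
      · exact (tendsto_pow_atTop two_ne_zero)
      · have := (tendsto_pow_atTop two_ne_zero :
          Tendsto (fun x:ℝ => x^2) atTop atTop).comp tendsto_neg_atBot_atTop
        exact this.congr (fun x => by simp [Function.comp, neg_pow])
    exact (tendsto_rpow_neg_atTop (by linarith) :
      Tendsto (fun x:ℝ => x ^ (-(δ/2))) atTop (𝓝 0)).comp h1 |>.congr
      (fun x => by simp [Function.comp, neg_div])
  have sq : Tendsto ψ (atTop ⊔ atBot) (𝓝 0) := by
    apply squeeze_zero_norm (fun x => ?_) key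
    simpa using hb x
  rw [tendsto_sup] at sq
  exact sq

lemma hint_s (hψ : Continuous ψ) (hC : 0 < C) (hδ : 1 < δ)
    (hb : ∀ x : ℝ, |ψ x| ≤ C * (1 + x ^ 2) ^ (-δ / 2)) (s : ℝ) :
    Integrable (fun t => |ψ t| * |ψ (t + s)|) := by
  refine ((psi_integrable hψ hδ hb).abs.mul_const C).mono'
    ((hψ.abs.mul ((hψ.comp (continuous_id.add continuous_const)).abs)).aestronglyMeasurable)
    (Eventually.of_forall fun t => ?_)
  rw [Real.norm_eq_abs, abs_of_nonneg (by positivity)]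
  exact mul_le_mul_of_nonneg_left (psi_bdd hC hδ hb _) (abs_nonneg _)

lemma g_tendsto (hψ : Continuous ψ) (hC : 0 < C) (hδ : 1 < δ)
    (hb : ∀ x : ℝ, |ψ x| ≤ C * (1 + x ^ 2) ^ (-δ / 2)) (l : Filter ℝ)
    (hl : l = atTop ∨ l = atBot) :
    Tendsto (fun s : ℝ => ∫ t : ℝ, |ψ t| * |ψ (t + s)|) l (𝓝 0) := by
  have h0 : (0:ℝ) = ∫ t : ℝ, (0:ℝ) := by simp
  rw [h0]
  have hlcg : l.IsCountablyGenerated := by rcases hl with h | h <;> subst h <;> infer_instance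
  apply tendsto_integral_filter_of_dominated_convergence (fun t => |ψ t| * C)
  · exact Eventually.of_forall fun s =>
      ((hψ.abs.mul ((hψ.comp (continuous_id.add continuous_const)).abs)).aestronglyMeasurable)
  · refine Eventually.of_forall fun s => Eventually.of_forall fun t => ?_
    rw [Real.norm_eq_abs, abs_of_nonneg (by positivity)]
    exact mul_le_mul_of_nonneg_left (psi_bdd hC hδ hb _) (abs_nonneg _)
  · exact (psi_integrable hψ hδ hb).abs.mul_const C
  · refine Eventually.of_forall fun t => ?_
    rw [show (0:ℝ) = |ψ t| * |(0:ℝ)| by simp]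
    apply Tendsto.mul tendsto_const_nhds
    apply Tendsto.abs
    rcases hl with h | h <;> subst h
    · exact (psi_tendsto hC hδ hb).1.comp (tendsto_atTop_add_const_left _ t tendsto_id)
    · exact (psi_tendsto hC hδ hb).2.comp (tendsto_atBot_add_const_left _ t tendsto_id)

lemma even_split (heven : ∀ x : ℝ, ψ (-x) = ψ x)
    (hsq : Integrable (fun x => ψ x ^ 2)) :
    (∫ t in Ioi (0:ℝ), ψ t ^ 2) + (∫ t in Ioi (0:ℝ), ψ t ^ 2) = ∫ t : ℝ, ψ t ^ 2 := by
  have h1 : (∫ t in Iic (0:ℝ), ψ t ^ 2) = ∫ t in Ioi (0:ℝ), ψ t ^ 2 := by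
    rw [← neg_zero, ← integral_comp_neg_Iic]
    simp only [heven, neg_zero]
  rw [← intervalIntegral.integral_Iic_add_Ioi (b := (0:ℝ)) hsq.integrableOn hsq.integrableOn, h1]

lemma K_form {a : ℝ} (ha : 0 < a) {c d : ℝ} (hcd : c ≤ d) (y z : ℝ) :
    (1/a) * ∫ x in Ioo c d, ψ ((x - y)/a) * ψ ((x - z)/a) =
    ∫ t in ((c-y)/a)..((d-y)/a), ψ t * ψ (t + (y - z)/a) := by
  set h : ℝ → ℝ := fun t => ψ t * ψ (t + (y - z)/a) with hh
  have e0 : ∀ x : ℝ, ψ ((x - y)/a) * ψ ((x - z)/a) = h ((x - y)/a) := fun x => by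
    simp only [hh]
    congr 2
    rw [← add_div]
    ring_nf
  calc (1/a) * ∫ x in Ioo c d, ψ ((x - y)/a) * ψ ((x - z)/a)
      = (1/a) * ∫ x in c..d, h ((x - y)/a) := by
        rw [intervalIntegral.integral_of_le hcd, integral_Ioc_eq_integral_Ioo]
        simp_rw [e0]
    _ = (1/a) * ∫ x in (c-y)..(d-y), h (x/a) := by
        rw [intervalIntegral.integral_comp_sub_right (fun u => h (u/a)) y]
    _ = (1/a) * (a • ∫ t in ((c-y)/a)..((d-y)/a), h t) := by
        rw [intervalIntegral.integral_comp_div h ha.ne']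
    _ = ∫ t in ((c-y)/a)..((d-y)/a), h t := by
        rw [smul_eq_mul]
        field_simp

lemma K_bound (hψ : Continuous ψ) (hC : 0 < C) (hδ : 1 < δ)
    (hb : ∀ x : ℝ, |ψ x| ≤ C * (1 + x ^ 2) ^ (-δ / 2)) (s u v : ℝ) :
    |∫ t in u..v, ψ t * ψ (t + s)| ≤ ∫ t : ℝ, |ψ t| * |ψ (t + s)| := by
  have h1 : |∫ t in u..v, ψ t * ψ (t + s)| ≤ ∫ t in Set.uIoc u v, |ψ t * ψ (t + s)| := by
    have := intervalIntegral.norm_integral_le_integral_norm_uIoc (f := fun t => ψ t * ψ (t + s))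
        (a := u) (b := v) (μ := volume)
    simpa [Real.norm_eq_abs, abs_mul] using this
  simp_rw [abs_mul] at h1
  refine h1.trans ?_
  apply setIntegral_le_integral (hint_s hψ hC hδ hb s)
  exact Eventually.of_forall fun t => by positivity

lemma K_bound2 (hψ : Continuous ψ) (hC : 0 < C) (hδ : 1 < δ)
    (hb : ∀ x : ℝ, |ψ x| ≤ C * (1 + x ^ 2) ^ (-δ / 2)) (s : ℝ) :
    (∫ t : ℝ, |ψ t| * |ψ (t + s)|) ≤ (∫ t : ℝ, |ψ t|) * C := by
  rw [← integral_mul_const]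
  refine integral_mono (hint_s hψ hC hδ hb s) ((psi_integrable hψ hδ hb).abs.mul_const C)
    (fun t => mul_le_mul_of_nonneg_left (psi_bdd hC hδ hb _) (abs_nonneg _))

end Aux

section Atoms

lemma meas_singleton_measurable (μ : Measure ℝ) [SFinite μ] :
    Measurable fun y : ℝ => (μ {y}).toReal := by
  have hd : MeasurableSet (Set.diagonal ℝ) :=
    measurableSet_eq_fun measurable_fst measurable_snd
  have h := (measurable_measure_prodMk_left (ν := μ) hd).ennreal_toReal
  have hpre : ∀ y : ℝ, Prod.mk y ⁻¹' (Set.diagonal ℝ) = {y} := fun y => by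
    ext z; simp [Set.diagonal, eq_comm]
  simpa [hpre] using h

lemma meas_singleton_integrable (μ : Measure ℝ) [IsFiniteMeasure μ] :
    Integrable (fun y : ℝ => (μ {y}).toReal) μ := by
  refine (integrable_const ((μ univ).toReal)).mono'
    (meas_singleton_measurable μ).aestronglyMeasurable (Eventually.of_forall fun y => ?_)
  rw [Real.norm_eq_abs, abs_of_nonneg ENNReal.toReal_nonneg]
  exact ENNReal.toReal_mono (measure_ne_top μ _) (measure_mono (subset_univ _))

lemma atom_integral (μ : Measure ℝ) [IsFiniteMeasure μ] (c d : ℝ) :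
    ∫ y in Ioo c d, (μ {y}).toReal ∂μ = ∑' x : Ioo c d, (μ {(x : ℝ)}).toReal ^ 2 := by
  classical
  set m : ℝ → ℝ := fun y => (μ {y}).toReal with hm
  have hSc : Set.Countable {t : ℝ | 0 < μ {t}} := by
    have := Measure.countable_meas_level_set_pos (μ := μ) (g := id) measurable_id
    simpa using this
  set T : Set ℝ := Ioo c d ∩ {t : ℝ | 0 < μ {t}} with hT
  have hTc : T.Countable := hSc.mono inter_subset_right
  have hint : Integrable m μ := meas_singleton_integrable μ
  have hzero : ∀ y : ℝ, ¬ 0 < μ {y} → m y = 0 := fun y h2 => by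
    simp only [hm]
    rw [le_antisymm (not_lt.mp h2) zero_le]
    simp
  have key : (Ioo c d).indicator m = T.indicator m := by
    funext y
    by_cases h1 : y ∈ Ioo c d
    · by_cases h2 : 0 < μ {y}
      · simp [indicator_apply, hT, h1, h2]
      · simp [indicator_apply, hT, h1, h2, hzero y h2]
    · simp [indicator_apply, hT, h1]
  have step1 : ∫ y in Ioo c d, m y ∂μ = ∫ y in T, m y ∂μ := by
    rw [← integral_indicator measurableSet_Ioo, ← integral_indicator hTc.measurableSet, key]
  rw [step1, setIntegral_countable m hTc (hint.integrableOn)]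
  have hind : T.indicator (fun a => m a ^ 2) = (Ioo c d).indicator (fun a => m a ^ 2) := by
    funext y
    by_cases h1 : y ∈ Ioo c d
    · by_cases h2 : 0 < μ {y}
      · simp [indicator_apply, hT, h1, h2]
      · simp [indicator_apply, hT, h1, h2, hzero y h2]
    · simp [indicator_apply, hT, h1]
  calc ∑' a : T, (μ {(a:ℝ)}).toReal • m (a:ℝ)
      = ∑' a : T, (fun y => m y ^ 2) (a:ℝ) := tsum_congr fun a => by
        simp [hm, sq, smul_eq_mul]
    _ = ∑' y : ℝ, T.indicator (fun a => m a ^ 2) y := tsum_subtype T (fun a => m a ^ 2)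
    _ = ∑' y : ℝ, (Ioo c d).indicator (fun a => m a ^ 2) y := by rw [hind]
    _ = ∑' x : Ioo c d, (μ {(x:ℝ)}).toReal ^ 2 := (tsum_subtype (Ioo c d) _).symm

end Atoms

/-- Theorem 2.4 (1): a Wiener-type theorem:
`(1/a) ∫_c^d |(ψ_a * μ)(x)|² dx → C₀ (Σ_{x ∈ (c,d)} μ({x})² + (μ({c})² + μ({d})²)/2)`. -/
theorem wiener_type_theorem
    (ψ : ℝ → ℝ) (hC1 : ContDiff ℝ 1 ψ) (hψ0 : ψ 0 = 1)
    (heven : ∀ x : ℝ, ψ (-x) = ψ x)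
    (hdecay : ∃ C > (0:ℝ), ∃ δ > (1:ℝ), ∀ x : ℝ,
      |ψ x| + |x * deriv ψ x| ≤ C * (1 + x ^ 2) ^ (-δ / 2))
    (μ : Measure ℝ) [IsProbabilityMeasure μ]
    (c d : ℝ) (hcd : c < d) :
    Tendsto (fun a : ℝ => (1 / a) * ∫ x in Ioo c d, |∫ y : ℝ, ψ ((x - y) / a) ∂μ| ^ 2)
      (𝓝[>] 0)
      (𝓝 ((∫ x : ℝ, |ψ x| ^ 2) *
        ((∑' x : Ioo c d, (μ {(x : ℝ)}).toReal ^ 2) +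
          (1 / 2) * ((μ {c}).toReal ^ 2 + (μ {d}).toReal ^ 2)))) := by
  classical
  obtain ⟨C, hC, δ, hδ, hdec⟩ := hdecay
  have hψc : Continuous ψ := hC1.continuous
  have hb : ∀ x : ℝ, |ψ x| ≤ C * (1 + x ^ 2) ^ (-δ / 2) := fun x =>
    le_trans (le_add_of_nonneg_right (abs_nonneg _)) (hdec x)
  have hsq : Integrable (fun x : ℝ => ψ x ^ 2) := psi_sq_integrable hψc hC hδ hb
  set L : ℝ := ∫ t in Ioi (0:ℝ), ψ t ^ 2 with hL
  set m : ℝ → ℝ := fun y => (μ {y}).toReal with hm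
  set W : ℝ → ℝ := fun y => if y ∈ Ioo c d then L + L else if y = c ∨ y = d then L else 0 with hW
  set f : ℝ × ℝ → ℝ := (Set.diagonal ℝ).indicator (fun p => W p.1) with hf
  set F : ℝ → ℝ × ℝ → ℝ :=
    fun a p => (1/a) * ∫ x in Ioo c d, ψ ((x - p.1)/a) * ψ ((x - p.2)/a) with hFdef
  -- limits of the primitive G
  have hGtop : Tendsto (fun b : ℝ => ∫ t in (0:ℝ)..b, ψ t ^ 2) atTop (𝓝 L) :=
    intervalIntegral_tendsto_integral_Ioi 0 hsq.integrableOn tendsto_id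
  have hGbot : Tendsto (fun b : ℝ => ∫ t in (0:ℝ)..b, ψ t ^ 2) atBot (𝓝 (-L)) := by
    have h := intervalIntegral_tendsto_integral_Iic 0 hsq.integrableOn (tendsto_id (x := atBot))
    have hIic : (∫ t in Iic (0:ℝ), ψ t ^ 2) = L := by
      have h2 := integral_comp_neg_Iic (0:ℝ) (fun t => ψ t ^ 2)
      simp only [heven, neg_zero] at h2
      rw [hL]
      exact h2
    rw [← hIic]
    have hsymm : ∀ b : ℝ, ∫ t in (0:ℝ)..b, ψ t ^ 2 = -∫ t in b..(0:ℝ), ψ t ^ 2 :=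
      fun b => (intervalIntegral.integral_symm _ _)
    exact (h.neg).congr fun b => (hsymm b).symm
  have hdiv_top : ∀ r : ℝ, 0 < r → Tendsto (fun a : ℝ => r / a) (𝓝[>] (0:ℝ)) atTop := by
    intro r hr
    simp only [div_eq_mul_inv]
    exact (tendsto_const_mul_atTop_of_pos hr).mpr tendsto_inv_nhdsGT_zero
  have hdiv_bot : ∀ r : ℝ, r < 0 → Tendsto (fun a : ℝ => r / a) (𝓝[>] (0:ℝ)) atBot := by
    intro r hr
    simp only [div_eq_mul_inv]
    exact (tendsto_const_mul_atBot_of_neg hr).mpr tendsto_inv_nhdsGT_zero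
  -- diagonal limits
  have hdiag : ∀ y : ℝ,
      Tendsto (fun a : ℝ => ∫ t in ((c-y)/a)..((d-y)/a), ψ t * ψ (t + (y - y)/a))
        (𝓝[>] (0:ℝ)) (𝓝 (W y)) := by
    intro y
    have e : ∀ a : ℝ, (∫ t in ((c-y)/a)..((d-y)/a), ψ t * ψ (t + (y - y)/a)) =
        (∫ t in (0:ℝ)..((d-y)/a), ψ t ^ 2) - (∫ t in (0:ℝ)..((c-y)/a), ψ t ^ 2) := by
      intro a
      have h1 : ∀ t : ℝ, ψ t * ψ (t + (y - y)/a) = ψ t ^ 2 := fun t => by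
        rw [sub_self, zero_div, add_zero, sq]
      simp_rw [h1]
      exact (intervalIntegral.integral_interval_sub_left
        hsq.intervalIntegrable hsq.intervalIntegrable).symm
    simp_rw [e]
    rcases lt_trichotomy y c with h | h | h
    · have hWy : W y = 0 := by
        have h1 : y ∉ Ioo c d := fun hy => absurd hy.1 (by linarith)
        have h2 : ¬ (y = c ∨ y = d) := by rintro (rfl | rfl) <;> linarith
        simp only [hW]
        rw [if_neg h1, if_neg h2]
      rw [hWy]
      have t1 : Tendsto (fun a : ℝ => ∫ t in (0:ℝ)..((d-y)/a), ψ t ^ 2) (𝓝[>] (0:ℝ)) (𝓝 L) :=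
        hGtop.comp (hdiv_top (d - y) (by linarith))
      have t2 : Tendsto (fun a : ℝ => ∫ t in (0:ℝ)..((c-y)/a), ψ t ^ 2) (𝓝[>] (0:ℝ)) (𝓝 L) :=
        hGtop.comp (hdiv_top (c - y) (by linarith))
      simpa using t1.sub t2
    · subst h
      have hWy : W y = L := by
        have h1 : y ∉ Ioo y d := fun hy => absurd hy.1 (lt_irrefl _)
        simp only [hW]
        rw [if_neg h1]
        simp
      rw [hWy]
      have t1 : Tendsto (fun a : ℝ => ∫ t in (0:ℝ)..((d-y)/a), ψ t ^ 2) (𝓝[>] (0:ℝ)) (𝓝 L) :=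
        hGtop.comp (hdiv_top (d - y) (by linarith))
      have e2 : ∀ a : ℝ, (∫ t in (0:ℝ)..((y-y)/a), ψ t ^ 2) = 0 := fun a => by
        rw [sub_self, zero_div, intervalIntegral.integral_same]
      simp_rw [e2, sub_zero]
      exact t1
    · rcases lt_trichotomy y d with h' | h' | h'
      · have hWy : W y = L + L := by
          simp only [hW]
          rw [if_pos (mem_Ioo.mpr ⟨h, h'⟩)]
        rw [hWy]
        have t1 : Tendsto (fun a : ℝ => ∫ t in (0:ℝ)..((d-y)/a), ψ t ^ 2) (𝓝[>] (0:ℝ)) (𝓝 L) :=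
          hGtop.comp (hdiv_top (d - y) (by linarith))
        have t2 : Tendsto (fun a : ℝ => ∫ t in (0:ℝ)..((c-y)/a), ψ t ^ 2)
            (𝓝[>] (0:ℝ)) (𝓝 (-L)) :=
          hGbot.comp (hdiv_bot (c - y) (by linarith))
        have := t1.sub t2
        simpa [sub_neg_eq_add] using this
      · subst h'
        have hWy : W y = L := by
          have h1 : y ∉ Ioo c y := fun hy => absurd hy.2 (lt_irrefl _)
          simp only [hW]
          rw [if_neg h1]
          simp
        rw [hWy]
        have t2 : Tendsto (fun a : ℝ => ∫ t in (0:ℝ)..((c-y)/a), ψ t ^ 2)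
            (𝓝[>] (0:ℝ)) (𝓝 (-L)) :=
          hGbot.comp (hdiv_bot (c - y) (by linarith))
        have e2 : ∀ a : ℝ, (∫ t in (0:ℝ)..((y-y)/a), ψ t ^ 2) = 0 := fun a => by
          rw [sub_self, zero_div, intervalIntegral.integral_same]
        simp_rw [e2]
        simpa using (tendsto_const_nhds (x := (0:ℝ)) (f := 𝓝[>] (0:ℝ))).sub t2
      · have hWy : W y = 0 := by
          have h1 : y ∉ Ioo c d := fun hy => absurd hy.2 (by linarith)
          have h2 : ¬ (y = c ∨ y = d) := by rintro (rfl | rfl) <;> linarith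
          simp only [hW]
          rw [if_neg h1, if_neg h2]
        rw [hWy]
        have t1 : Tendsto (fun a : ℝ => ∫ t in (0:ℝ)..((d-y)/a), ψ t ^ 2)
            (𝓝[>] (0:ℝ)) (𝓝 (-L)) :=
          hGbot.comp (hdiv_bot (d - y) (by linarith))
        have t2 : Tendsto (fun a : ℝ => ∫ t in (0:ℝ)..((c-y)/a), ψ t ^ 2)
            (𝓝[>] (0:ℝ)) (𝓝 (-L)) :=
          hGbot.comp (hdiv_bot (c - y) (by linarith))
        simpa using t1.sub t2
  -- off-diagonal limits
  have hoff : ∀ y z : ℝ, y ≠ z →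
      Tendsto (fun a : ℝ => ∫ t in ((c-y)/a)..((d-y)/a), ψ t * ψ (t + (y - z)/a))
        (𝓝[>] (0:ℝ)) (𝓝 0) := by
    intro y z hyz
    apply squeeze_zero_norm (a := fun a : ℝ => ∫ t : ℝ, |ψ t| * |ψ (t + (y-z)/a)|)
    · intro a
      rw [Real.norm_eq_abs]
      exact K_bound hψc hC hδ hb _ _ _
    · rcases hyz.lt_or_gt with h | h
      · exact (g_tendsto hψc hC hδ hb atBot (Or.inr rfl)).comp (hdiv_bot (y-z) (by linarith))
      · exact (g_tendsto hψc hC hδ hb atTop (Or.inl rfl)).comp (hdiv_top (y-z) (by linarith))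
  -- pointwise limit of F
  have hlim : ∀ p : ℝ × ℝ, Tendsto (fun a : ℝ => F a p) (𝓝[>] (0:ℝ)) (𝓝 (f p)) := by
    rintro ⟨y, z⟩
    have hcongr : (fun a : ℝ => F a (y, z)) =ᶠ[𝓝[>] (0:ℝ)]
        (fun a : ℝ => ∫ t in ((c-y)/a)..((d-y)/a), ψ t * ψ (t + (y - z)/a)) := by
      filter_upwards [self_mem_nhdsWithin] with a ha
      exact K_form (ha : (0:ℝ) < a) hcd.le y z
    rw [Filter.tendsto_congr' hcongr]
    by_cases hyz : y = z
    · subst hyz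
      have hfp : f (y, y) = W y := by
        simp [hf, indicator_apply, Set.mem_diagonal_iff]
      rw [hfp]
      exact hdiag y
    · have hfp : f (y, z) = 0 := by
        simp [hf, indicator_apply, Set.mem_diagonal_iff, hyz]
      rw [hfp]
      exact hoff y z hyz
  -- measurability of F a
  have hmeasF : ∀ a : ℝ, AEStronglyMeasurable (F a) (μ.prod μ) := by
    intro a
    have hcont : Continuous (fun q : (ℝ × ℝ) × ℝ => ψ ((q.2 - q.1.1)/a) * ψ ((q.2 - q.1.2)/a)) :=
      (hψc.comp ((continuous_snd.sub continuous_fst.fst).div_const a)).mul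
        (hψc.comp ((continuous_snd.sub continuous_fst.snd).div_const a))
    exact ((hcont.stronglyMeasurable.integral_prod_right'
      (ν := volume.restrict (Ioo c d))).const_mul (1/a)).aestronglyMeasurable
  -- uniform bound
  have hbound : ∀ᶠ a in 𝓝[>] (0:ℝ), ∀ᵐ p ∂(μ.prod μ), ‖F a p‖ ≤ (∫ t : ℝ, |ψ t|) * C := by
    filter_upwards [self_mem_nhdsWithin] with a ha
    refine Eventually.of_forall fun p => ?_
    simp only [Real.norm_eq_abs, hFdef]
    rw [K_form (ψ := ψ) (ha : (0:ℝ) < a) hcd.le p.1 p.2]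
    exact (K_bound hψc hC hδ hb _ _ _).trans (K_bound2 hψc hC hδ hb _)
  -- dominated convergence
  have hDCT : Tendsto (fun a : ℝ => ∫ p, F a p ∂(μ.prod μ)) (𝓝[>] (0:ℝ))
      (𝓝 (∫ p, f p ∂(μ.prod μ))) :=
    tendsto_integral_filter_of_dominated_convergence _
      (Eventually.of_forall hmeasF) hbound (integrable_const _) (Eventually.of_forall hlim)
  -- identify the prelimit
  have hstepA : (fun a : ℝ => (1 / a) * ∫ x in Ioo c d, |∫ y : ℝ, ψ ((x - y) / a) ∂μ| ^ 2)
      =ᶠ[𝓝[>] (0:ℝ)] (fun a : ℝ => ∫ p, F a p ∂(μ.prod μ)) := by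
    filter_upwards [self_mem_nhdsWithin] with a ha
    haveI : IsFiniteMeasure (volume.restrict (Ioo c d)) := by
      constructor
      rw [Measure.restrict_apply_univ, Real.volume_Ioo]
      exact ENNReal.ofReal_lt_top
    have hcont : Continuous (fun q : ℝ × (ℝ × ℝ) => ψ ((q.1 - q.2.1)/a) * ψ ((q.1 - q.2.2)/a)) :=
      (hψc.comp ((continuous_fst.sub continuous_snd.fst).div_const a)).mul
        (hψc.comp ((continuous_fst.sub continuous_snd.snd).div_const a))
    have hswap : Integrable
        (Function.uncurry fun (x : ℝ) (p : ℝ × ℝ) => ψ ((x - p.1)/a) * ψ ((x - p.2)/a))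
        ((volume.restrict (Ioo c d)).prod (μ.prod μ)) := by
      refine (integrable_const (C * C)).mono' hcont.aestronglyMeasurable
        (Eventually.of_forall fun q => ?_)
      show ‖ψ ((q.1 - q.2.1)/a) * ψ ((q.1 - q.2.2)/a)‖ ≤ C * C
      rw [Real.norm_eq_abs, abs_mul]
      exact mul_le_mul (psi_bdd hC hδ hb _) (psi_bdd hC hδ hb _) (abs_nonneg _) hC.le
    calc (1/a) * ∫ x in Ioo c d, |∫ y : ℝ, ψ ((x - y)/a) ∂μ| ^ 2
        = (1/a) * ∫ x in Ioo c d,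
            ∫ p : ℝ × ℝ, ψ ((x - p.1)/a) * ψ ((x - p.2)/a) ∂(μ.prod μ) := by
          congr 1
          refine integral_congr_ae (Eventually.of_forall fun x => ?_)
          show |∫ y : ℝ, ψ ((x - y)/a) ∂μ| ^ 2
              = ∫ p : ℝ × ℝ, ψ ((x - p.1)/a) * ψ ((x - p.2)/a) ∂(μ.prod μ)
          rw [sq_abs, sq, ← integral_prod_mul]
      _ = (1/a) * ∫ p : ℝ × ℝ,
            (∫ x in Ioo c d, ψ ((x - p.1)/a) * ψ ((x - p.2)/a)) ∂(μ.prod μ) := by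
          rw [integral_integral_swap hswap]
      _ = ∫ p, F a p ∂(μ.prod μ) := by
          simp only [hFdef]
          exact (integral_const_mul (1/a) _).symm
  -- compute the limit integral
  have hWmeas : Measurable W := by
    refine Measurable.ite measurableSet_Ioo measurable_const
      (Measurable.ite ?_ measurable_const measurable_const)
    have hset : {y : ℝ | y = c ∨ y = d} = {c, d} := by ext; simp
    rw [hset]
    exact (measurableSet_singleton d).insert c
  have hd' : MeasurableSet (Set.diagonal ℝ) :=
    measurableSet_eq_fun measurable_fst measurable_snd
  have hfmeas : Measurable f := (hWmeas.comp measurable_fst).indicator hd'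
  have hWb : ∀ y : ℝ, |W y| ≤ |L| + |L| := by
    intro y
    by_cases h1 : y ∈ Ioo c d
    · simp only [hW, if_pos h1]
      exact abs_add_le L L
    · by_cases h2 : y = c ∨ y = d
      · simp only [hW, if_neg h1, if_pos h2]
        linarith [abs_nonneg L]
      · simp only [hW, if_neg h1, if_neg h2, abs_zero]
        positivity
  have hfint : Integrable f (μ.prod μ) := by
    refine (integrable_const (|L| + |L|)).mono' hfmeas.aestronglyMeasurable
      (Eventually.of_forall fun p => ?_)
    rw [Real.norm_eq_abs, hf]
    by_cases hp : p ∈ Set.diagonal ℝ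
    · rw [indicator_of_mem hp]
      exact hWb p.1
    · rw [indicator_of_notMem hp, abs_zero]
      positivity
  have hin : ∀ y : ℝ, (∫ z, f (y, z) ∂μ) = W y * m y := by
    intro y
    have hfun : (fun z => f (y, z)) = ({y} : Set ℝ).indicator (fun _ => W y) := by
      funext z
      by_cases h : y = z
      · subst h
        simp [hf, indicator_apply, Set.mem_diagonal_iff]
      · simp [hf, indicator_apply, Set.mem_diagonal_iff, h, Ne.symm h]
    rw [hfun, integral_indicator (measurableSet_singleton y), setIntegral_const, smul_eq_mul]
    rw [hm, measureReal_def]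
    ring
  have hmint : Integrable m μ := meas_singleton_integrable μ
  have hdecomp : ∀ y : ℝ, W y * m y =
      (L + L) * (Ioo c d).indicator m y + L * ({c} : Set ℝ).indicator m y
        + L * ({d} : Set ℝ).indicator m y := by
    intro y
    by_cases h1 : y ∈ Ioo c d
    · have hc' : y ≠ c := by intro h; rw [h] at h1; exact lt_irrefl c h1.1
      have hd2 : y ≠ d := by intro h; rw [h] at h1; exact lt_irrefl d h1.2
      simp only [hW, indicator_apply, mem_singleton_iff]
      rw [if_pos h1, if_pos h1, if_neg hc', if_neg hd2]
      ring
    · by_cases h2 : y = c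
      · have h3 : y ≠ d := by rw [h2]; exact hcd.ne
        simp only [hW, indicator_apply, mem_singleton_iff]
        rw [if_neg h1, if_pos (Or.inl h2), if_neg h1, if_pos h2, if_neg h3]
        ring
      · by_cases h3 : y = d
        · simp only [hW, indicator_apply, mem_singleton_iff]
          rw [if_neg h1, if_pos (Or.inr h3), if_neg h1, if_neg h2, if_pos h3]
          ring
        · simp only [hW, indicator_apply, mem_singleton_iff]
          rw [if_neg h1, if_neg (by tauto), if_neg h1, if_neg h2, if_neg h3]
          ring
  have hval : ∫ p, f p ∂(μ.prod μ) =
      (∫ x : ℝ, |ψ x| ^ 2) *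
        ((∑' x : Ioo c d, (μ {(x : ℝ)}).toReal ^ 2) +
          (1 / 2) * ((μ {c}).toReal ^ 2 + (μ {d}).toReal ^ 2)) := by
    have hC0 : (∫ x : ℝ, |ψ x| ^ 2) = L + L := by
      simp_rw [sq_abs]
      exact (even_split heven hsq).symm
    rw [MeasureTheory.integral_prod _ hfint]
    simp_rw [hin, hdecomp]
    have i1 : Integrable (fun y : ℝ => (L+L) * (Ioo c d).indicator m y) μ :=
      (hmint.indicator measurableSet_Ioo).const_mul _
    have i2 : Integrable (fun y : ℝ => L * ({c} : Set ℝ).indicator m y) μ :=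
      (hmint.indicator (measurableSet_singleton c)).const_mul _
    have i3 : Integrable (fun y : ℝ => L * ({d} : Set ℝ).indicator m y) μ :=
      (hmint.indicator (measurableSet_singleton d)).const_mul _
    have i12 : Integrable (fun y : ℝ =>
        (L+L) * (Ioo c d).indicator m y + L * ({c} : Set ℝ).indicator m y) μ := i1.add i2
    rw [integral_add i12 i3, integral_add i1 i2, integral_const_mul, integral_const_mul,
      integral_const_mul, integral_indicator measurableSet_Ioo,
      integral_indicator (measurableSet_singleton c),
      integral_indicator (measurableSet_singleton d),
      integral_singleton, integral_singleton]
    simp only [hm, smul_eq_mul, measureReal_def]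
    rw [atom_integral μ c d, hC0]
    ring
  have hfinal := Tendsto.congr' hstepA.symm hDCT
  rwa [hval] at hfinal
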